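/- Every connected cubic graph G on n vertices that contains a supercycle on s vertices, with n > 2s − 2, admits a partition of its vertex set into two parts A and B such that the edges between A and B form a matching of size at most s − 2, and both induced subgraphs G[A] and G[B] are connected supercycles. -/

import Mathlib

open SimpleGraph

set_option linter.unusedSectionVars false
set_option maxHeartbeats 1000000

section AuxSupercycle

variable {V : Type*} [Fintype V] {G : SimpleGraph V}

lemma aux_reach {S : Set V} {x y : V} (w : G.Walk x y) (hw : ∀ z ∈ w.support, z ∈ S)
    (hx : x ∈ S) (hy : y ∈ S) :
    (G.induce S).Reachable ⟨x, hx⟩ ⟨y, hy⟩ := by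
  induction w with
  | nil => rfl
  | @cons a b c h p ih =>
      have hb : b ∈ S := hw b (by simp)
      refine Reachable.trans (Adj.reachable ?_) (ih (fun z hz => hw z (by simp [hz])) hb hy)
      simpa using h

lemma aux_walk_of_conn {S : Set V} (h : (G.induce S).Connected) {x y : V}
    (hx : x ∈ S) (hy : y ∈ S) : ∃ w : G.Walk x y, ∀ z ∈ w.support, z ∈ S := by
  obtain ⟨p⟩ := h ⟨x, hx⟩ ⟨y, hy⟩
  refine ⟨p.map (Embedding.induce S).toHom, ?_⟩
  intro z hz
  change z ∈ (p.map (Embedding.induce S).toHom).support at hz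
  rw [Walk.support_map, List.mem_map] at hz
  obtain ⟨u, _, rfl⟩ := hz
  exact u.2

lemma aux_conn {S : Set V} {v0 : V} (hv0 : v0 ∈ S)
    (h : ∀ x, x ∈ S → ∃ w : G.Walk x v0, ∀ z ∈ w.support, z ∈ S) :
    (G.induce S).Connected := by
  rw [connected_iff]
  refine ⟨?_, ⟨⟨v0, hv0⟩⟩⟩
  rintro ⟨x, hx⟩ ⟨y, hy⟩
  obtain ⟨w1, h1⟩ := h x hx
  obtain ⟨w2, h2⟩ := h y hy
  exact (aux_reach w1 h1 hx hv0).trans (aux_reach w2 h2 hy hv0).symm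

lemma aux_bridge (S : Set V) (v : ↥S) :
    {u : ↥S | (G.induce S).Adj v u}.ncard = (G.neighborSet ↑v ∩ S).ncard := by
  have himg : G.neighborSet ↑v ∩ S = Subtype.val '' {u : ↥S | (G.induce S).Adj v u} := by
    ext u
    simp only [Set.mem_inter_iff, mem_neighborSet, Set.mem_image, Set.mem_setOf_eq]
    constructor
    · rintro ⟨hadj, hu⟩; exact ⟨⟨u, hu⟩, by simpa using hadj, rfl⟩
    · rintro ⟨⟨u', hu'⟩, hadj, rfl⟩; exact ⟨by simpa using hadj, hu'⟩
  rw [himg, Set.ncard_image_of_injective _ Subtype.val_injective]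

lemma aux_cut_eq_sum (G : SimpleGraph V) (S : Set V) :
    {q : V × V | q.1 ∈ S ∧ q.2 ∉ S ∧ G.Adj q.1 q.2}.ncard
      = ∑ v ∈ S.toFinite.toFinset, (G.neighborSet v \ S).ncard := by
  classical
  set F := {q : V × V | q.1 ∈ S ∧ q.2 ∉ S ∧ G.Adj q.1 q.2} with hF
  rw [Set.ncard_eq_toFinset_card F F.toFinite]
  rw [Finset.card_eq_sum_card_fiberwise
    (f := Prod.fst) (t := S.toFinite.toFinset)
    (fun q hq => by rw [Finset.mem_coe, Set.Finite.mem_toFinset] at hq ⊢; exact hq.1)]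
  refine Finset.sum_congr rfl fun v hv => ?_
  rw [Set.ncard_eq_toFinset_card _ (G.neighborSet v \ S).toFinite]
  refine Finset.card_bij' (fun q _ => q.2) (fun b _ => (v, b)) ?_ ?_ ?_ ?_
  · intro q hq
    simp only [Finset.mem_filter, Set.Finite.mem_toFinset, hF, Set.mem_setOf_eq] at hq
    obtain ⟨⟨h1, h2, h3⟩, h4⟩ := hq
    simp only [Set.Finite.mem_toFinset, Set.mem_diff, mem_neighborSet]
    exact ⟨h4 ▸ h3, h2⟩
  · intro b hb
    simp only [Set.Finite.mem_toFinset, Set.mem_diff, mem_neighborSet] at hb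
    simp only [Finset.mem_filter, Set.Finite.mem_toFinset, hF, Set.mem_setOf_eq]
    exact ⟨⟨by simpa using hv, hb.2, hb.1⟩, trivial⟩
  · intro q hq
    simp only [Finset.mem_filter] at hq
    exact Prod.ext hq.2.symm rfl
  · intro b _; rfl

lemma aux_step (hreg : ∀ v, (G.neighborSet v).ncard = 3) {A : Set V} {b : V}
    (hb : b ∉ A) (h2 : 2 ≤ (G.neighborSet b ∩ A).ncard) :
    {q : V × V | q.1 ∈ insert b A ∧ q.2 ∉ insert b A ∧ G.Adj q.1 q.2}.ncard + 1
      ≤ {q : V × V | q.1 ∈ A ∧ q.2 ∉ A ∧ G.Adj q.1 q.2}.ncard := by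
  classical
  rw [aux_cut_eq_sum, aux_cut_eq_sum]
  obtain ⟨a1, a2, ha1, ha2, hne⟩ :=
    (Set.one_lt_ncard_iff (G.neighborSet b ∩ A).toFinite).mp (by omega)
  have hsplit : ∀ (v : V) (S : Set V),
      (G.neighborSet v ∩ S).ncard + (G.neighborSet v \ S).ncard = 3 := fun v S => by
    rw [Set.ncard_inter_add_ncard_diff_eq_ncard _ _ (G.neighborSet v).toFinite, hreg]
  have houtb : (G.neighborSet b \ insert b A).ncard ≤ 1 := by
    have hmono : (G.neighborSet b ∩ A).ncard ≤ (G.neighborSet b ∩ insert b A).ncard :=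
      Set.ncard_le_ncard (Set.inter_subset_inter_right _ (Set.subset_insert _ _))
        ((G.neighborSet b ∩ insert b A).toFinite)
    have := hsplit b (insert b A)
    omega
  have hmono : ∀ v : V, (G.neighborSet v \ insert b A).ncard ≤ (G.neighborSet v \ A).ncard :=
    fun v => Set.ncard_le_ncard (Set.diff_subset_diff_right (Set.subset_insert _ _))
      ((G.neighborSet v \ A).toFinite)
  have hsave : ∀ a, a ∈ G.neighborSet b ∩ A →
      (G.neighborSet a \ insert b A).ncard + 1 ≤ (G.neighborSet a \ A).ncard := by
    intro a ha
    have hbmem : b ∈ G.neighborSet a \ A := ⟨ha.1.symm, hb⟩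
    have hsub : G.neighborSet a \ insert b A ⊆ (G.neighborSet a \ A) \ {b} := by
      intro z hz
      refine ⟨⟨hz.1, fun hzA => hz.2 (Set.mem_insert_of_mem _ hzA)⟩, fun hzb => ?_⟩
      exact hz.2 (by rw [Set.mem_singleton_iff] at hzb; rw [hzb]; exact Set.mem_insert _ _)
    calc (G.neighborSet a \ insert b A).ncard + 1
        ≤ ((G.neighborSet a \ A) \ {b}).ncard + 1 := by
          exact Nat.add_le_add_right (Set.ncard_le_ncard hsub (Set.toFinite _)) 1
      _ = (G.neighborSet a \ A).ncard :=
          Set.ncard_diff_singleton_add_one hbmem (Set.toFinite _)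
  set tA := A.toFinite.toFinset with htA
  have hins : (insert b A).toFinite.toFinset = insert b tA := by
    ext z; simp only [Set.Finite.mem_toFinset, Finset.mem_insert, htA, Set.mem_insert_iff]
  rw [hins, Finset.sum_insert (by simp only [htA, Set.Finite.mem_toFinset]; exact hb)]
  have ha1t : a1 ∈ tA := by simp only [htA, Set.Finite.mem_toFinset]; exact ha1.2
  have ha2t : a2 ∈ tA.erase a1 :=
    Finset.mem_erase.mpr ⟨hne.symm, by simp only [htA, Set.Finite.mem_toFinset]; exact ha2.2⟩
  have hexp : ∀ f : V → ℕ, ∑ v ∈ tA, f v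
      = f a1 + (f a2 + ∑ v ∈ (tA.erase a1).erase a2, f v) := by
    intro f
    rw [Finset.add_sum_erase _ f ha2t, Finset.add_sum_erase _ f ha1t]
  rw [hexp, hexp]
  have hrest : ∑ v ∈ (tA.erase a1).erase a2, (G.neighborSet v \ insert b A).ncard
      ≤ ∑ v ∈ (tA.erase a1).erase a2, (G.neighborSet v \ A).ncard :=
    Finset.sum_le_sum fun v _ => hmono v
  have h1 := hsave a1 ha1
  have h2' := hsave a2 ha2
  omega

lemma aux_initial (hreg : ∀ v, (G.neighborSet v).ncard = 3) (A0 : Set V)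
    (hd2 : ∀ v ∈ A0, 2 ≤ (G.neighborSet v ∩ A0).ncard)
    (hd3 : ∃ v ∈ A0, 3 ≤ (G.neighborSet v ∩ A0).ncard) :
    {q : V × V | q.1 ∈ A0 ∧ q.2 ∉ A0 ∧ G.Adj q.1 q.2}.ncard + 2 ≤ A0.ncard := by
  classical
  haveI : Fintype ↥A0 := A0.toFinite.fintype
  set J := G.induce A0 with hJ
  haveI : DecidableRel J.Adj := Classical.decRel _
  have hdle : ∀ v : V, (G.neighborSet v ∩ A0).ncard ≤ 3 := fun v => by
    rw [← hreg v]; exact Set.ncard_le_ncard Set.inter_subset_left (Set.toFinite _)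
  have hdeg : ∀ v : ↥A0, J.degree v = (G.neighborSet ↑v ∩ A0).ncard := by
    intro v
    have h1 : {u : ↥A0 | J.Adj v u} = J.neighborSet v := rfl
    have h2 : {u : ↥A0 | J.Adj v u}.ncard = (G.neighborSet ↑v ∩ A0).ncard := by
      have himg : G.neighborSet ↑v ∩ A0 = Subtype.val '' {u : ↥A0 | J.Adj v u} := by
        ext u
        simp only [Set.mem_inter_iff, mem_neighborSet, Set.mem_image, Set.mem_setOf_eq]
        constructor
        · rintro ⟨hadj, hu⟩; exact ⟨⟨u, hu⟩, by simpa [hJ] using hadj, rfl⟩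
        · rintro ⟨⟨u', hu'⟩, hadj, rfl⟩; exact ⟨by simpa [hJ] using hadj, hu'⟩
      rw [himg, Set.ncard_image_of_injective _ Subtype.val_injective]
    rw [← h2, h1, ← card_neighborSet_eq_degree, Set.ncard_eq_toFinset_card',
      Set.toFinset_card]
  set t3 := Finset.univ.filter (fun v : ↥A0 => (G.neighborSet ↑v ∩ A0).ncard = 3) with ht3def
  have heven : Even t3.card := by
    have h := J.even_card_odd_degree_vertices
    have : Finset.univ.filter (fun v : ↥A0 => Odd (J.degree v)) = t3 := by
      apply Finset.filter_congr
      intro v _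
      rw [hdeg v]
      have h2 := hd2 ↑v v.2
      have h3 := hdle ↑v
      simp only [Nat.odd_iff, eq_iff_iff]
      constructor <;> intro h' <;> omega
    rwa [this] at h
  have ht3pos : 1 ≤ t3.card := by
    obtain ⟨v, hv, h3⟩ := hd3
    have : (⟨v, hv⟩ : ↥A0) ∈ t3 := by
      simp only [ht3def, Finset.mem_filter, Finset.mem_univ, true_and]
      have := hdle v; omega
    exact Finset.card_pos.mpr ⟨_, this⟩
  have htwo : 2 ≤ t3.card := by
    obtain ⟨r, hr⟩ := heven; omega
  rw [aux_cut_eq_sum]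
  have hsum : ∑ v ∈ A0.toFinite.toFinset, (G.neighborSet v \ A0).ncard
      = ∑ v : ↥A0, (G.neighborSet ↑v \ A0).ncard := by
    exact Finset.sum_subtype A0.toFinite.toFinset (fun x => Set.Finite.mem_toFinset _)
      (fun v => (G.neighborSet v \ A0).ncard)
  rw [hsum]
  have hsplitv : ∀ v : ↥A0,
      (G.neighborSet ↑v ∩ A0).ncard + (G.neighborSet ↑v \ A0).ncard = 3 := fun v => by
    rw [Set.ncard_inter_add_ncard_diff_eq_ncard _ _ (G.neighborSet ↑v).toFinite, hreg]
  have hsplit := Finset.sum_filter_add_sum_filter_not Finset.univ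
    (fun v : ↥A0 => (G.neighborSet ↑v ∩ A0).ncard = 3)
    (fun v : ↥A0 => (G.neighborSet ↑v \ A0).ncard)
  have hzero : ∑ v ∈ t3, (G.neighborSet ↑v \ A0).ncard = 0 := by
    refine Finset.sum_eq_zero fun v hv => ?_
    simp only [ht3def, Finset.mem_filter] at hv
    have := hsplitv v; omega
  have hone : ∑ v ∈ Finset.univ.filter
        (fun v : ↥A0 => ¬ (G.neighborSet ↑v ∩ A0).ncard = 3), (G.neighborSet ↑v \ A0).ncard
      = (Finset.univ.filter
        (fun v : ↥A0 => ¬ (G.neighborSet ↑v ∩ A0).ncard = 3)).card := by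
    rw [Finset.card_eq_sum_ones]
    refine Finset.sum_congr rfl fun v hv => ?_
    simp only [Finset.mem_filter] at hv
    have := hsplitv v
    have := hd2 ↑v v.2
    have := hdle ↑v
    omega
  have hcards := Finset.card_filter_add_card_filter_not
    (s := (Finset.univ : Finset ↥A0))
    (p := fun v : ↥A0 => (G.neighborSet ↑v ∩ A0).ncard = 3)
  have hcardA0 : (Finset.univ : Finset ↥A0).card = A0.ncard := by
    rw [Finset.card_univ, ← Nat.card_coe_set_eq, Nat.card_eq_fintype_card]
  rw [← hsplit, hzero, hone]
  simp only [ht3def] at htwo hcards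
  omega

end AuxSupercycle


/-- Every connected cubic graph on `n` vertices containing a supercycle on `s` vertices,
with `n > 2s - 2`, has a suitable M-cut of size at most `s - 2`: a vertex partition
`(A, Aᶜ)` whose crossing edges form a matching of size at most `s - 2`, both sides inducing
connected supercycles. -/
theorem cubic_suitable_M_cut_of_supercycle {V : Type*} [Fintype V] (G : SimpleGraph V) (s : ℕ)
    (hconn : G.Connected) (hreg : ∀ v, (G.neighborSet v).ncard = 3)
    (H : G.Subgraph) (hHconn : H.Connected)
    (hHdeg : ∀ v ∈ H.verts, 2 ≤ (H.neighborSet v).ncard)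
    (hHsup : ∃ v ∈ H.verts, 3 ≤ (H.neighborSet v).ncard)
    (hs : H.verts.ncard = s)
    (hn : Fintype.card V > 2 * s - 2) :
    ∃ A : Set V,
      (∀ a b a' b' : V, a ∈ A → b ∉ A → G.Adj a b → a' ∈ A → b' ∉ A → G.Adj a' b' →
        (a = a' ↔ b = b')) ∧
      {q : V × V | q.1 ∈ A ∧ q.2 ∉ A ∧ G.Adj q.1 q.2}.ncard ≤ s - 2 ∧
      (G.induce A).Connected ∧
      (∀ v : A, 2 ≤ {u : A | (G.induce A).Adj v u}.ncard) ∧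
      (∃ v : A, 3 ≤ {u : A | (G.induce A).Adj v u}.ncard) ∧
      (G.induce Aᶜ).Connected ∧
      (∀ v : ↥Aᶜ, 2 ≤ {u : ↥Aᶜ | (G.induce Aᶜ).Adj v u}.ncard) ∧
      (∃ v : ↥Aᶜ, 3 ≤ {u : ↥Aᶜ | (G.induce Aᶜ).Adj v u}.ncard) := by
  classical
  have hsplit : ∀ (v : V) (S : Set V),
      (G.neighborSet v ∩ S).ncard + (G.neighborSet v \ S).ncard = 3 := fun v S => by
    rw [Set.ncard_inter_add_ncard_diff_eq_ncard _ _ (G.neighborSet v).toFinite, hreg]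
  -- the growth process
  have key : ∀ (k : ℕ) (A : Set V),
      (G.induce A).Connected →
      (∀ a ∈ A, 2 ≤ (G.neighborSet a ∩ A).ncard) →
      (∃ a ∈ A, 3 ≤ (G.neighborSet a ∩ A).ncard) →
      s ≤ A.ncard →
      {q : V × V | q.1 ∈ A ∧ q.2 ∉ A ∧ G.Adj q.1 q.2}.ncard + A.ncard + 2 ≤ 2 * s →
      Fintype.card V ≤ A.ncard + k →
      ∃ A' : Set V, (G.induce A').Connected ∧
        (∀ a ∈ A', 2 ≤ (G.neighborSet a ∩ A').ncard) ∧
        (∃ a ∈ A', 3 ≤ (G.neighborSet a ∩ A').ncard) ∧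
        s ≤ A'.ncard ∧
        {q : V × V | q.1 ∈ A' ∧ q.2 ∉ A' ∧ G.Adj q.1 q.2}.ncard + A'.ncard + 2 ≤ 2 * s ∧
        (∀ b, b ∉ A' → (G.neighborSet b ∩ A').ncard ≤ 1) := by
    intro k
    induction k with
    | zero =>
        intro A _ _ _ _ hcut hle
        exfalso
        omega
    | succ k ih =>
        intro A hA1 hA2 hA3 hA4 hA5 hle
        by_cases hstop : ∀ b, b ∉ A → (G.neighborSet b ∩ A).ncard ≤ 1
        · exact ⟨A, hA1, hA2, hA3, hA4, hA5, hstop⟩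
        · push_neg at hstop
          obtain ⟨b, hb, h2'⟩ := hstop
          have h2 : 2 ≤ (G.neighborSet b ∩ A).ncard := h2'
          obtain ⟨a, ha⟩ : (G.neighborSet b ∩ A).Nonempty :=
            Set.nonempty_of_ncard_ne_zero (by omega)
          have hins_ncard : (insert b A).ncard = A.ncard + 1 :=
            Set.ncard_insert_of_notMem hb (Set.toFinite _)
          have hmono : ∀ x : V, (G.neighborSet x ∩ A).ncard
              ≤ (G.neighborSet x ∩ insert b A).ncard := fun x =>
            Set.ncard_le_ncard (Set.inter_subset_inter_right _ (Set.subset_insert _ _))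
              (Set.toFinite _)
          refine ih (insert b A) ?_ ?_ ?_ ?_ ?_ ?_
          · refine aux_conn (v0 := a) (Set.mem_insert_of_mem _ ha.2) ?_
            intro x hx
            rcases Set.mem_insert_iff.mp hx with rfl | hxA
            · refine ⟨Walk.cons ha.1 Walk.nil, ?_⟩
              intro z hz
              change z ∈ (Walk.cons (show G.Adj x a from ha.1) Walk.nil).support at hz
              simp only [Walk.support_cons, Walk.support_nil, List.mem_cons,
                List.mem_singleton] at hz
              rcases hz with rfl | hz
              · exact Set.mem_insert _ _
              · rcases hz with rfl | h
                · exact Set.mem_insert_of_mem _ ha.2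
                · exact absurd h List.not_mem_nil
            · obtain ⟨w, hw⟩ := aux_walk_of_conn hA1 hxA ha.2
              exact ⟨w, fun z hz => Set.mem_insert_of_mem _ (hw z hz)⟩
          · intro x hx
            rcases Set.mem_insert_iff.mp hx with rfl | hxA
            · exact le_trans h2 (hmono x)
            · exact le_trans (hA2 x hxA) (hmono x)
          · obtain ⟨a', ha', h3⟩ := hA3
            exact ⟨a', Set.mem_insert_of_mem _ ha', le_trans h3 (hmono a')⟩
          · omega
          · have hstep := aux_step hreg hb h2
            omega
          · omega
  -- initial set
  have hnbrH : ∀ v, H.neighborSet v ⊆ G.neighborSet v ∩ H.verts := by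
    intro v w hw
    exact ⟨H.adj_sub hw, hw.snd_mem⟩
  have hd2₀ : ∀ v ∈ H.verts, 2 ≤ (G.neighborSet v ∩ H.verts).ncard := fun v hv =>
    le_trans (hHdeg v hv) (Set.ncard_le_ncard (hnbrH v) (Set.toFinite _))
  have hd3₀ : ∃ v ∈ H.verts, 3 ≤ (G.neighborSet v ∩ H.verts).ncard := by
    obtain ⟨v, hv, h3⟩ := hHsup
    exact ⟨v, hv, le_trans h3 (Set.ncard_le_ncard (hnbrH v) (Set.toFinite _))⟩
  have hconn₀ : (G.induce H.verts).Connected := by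
    refine Connected.mono ?_ hHconn.coe
    intro a b hadj
    exact H.adj_sub hadj
  have hcut₀ := aux_initial hreg H.verts hd2₀ hd3₀
  obtain ⟨A, hA1, hA2, hA3, hA4, hA5, hstable⟩ :=
    key (Fintype.card V) H.verts hconn₀ hd2₀ hd3₀ (le_of_eq hs.symm) (by omega) (by omega)
  -- complement cardinality
  have hcards : A.ncard + Aᶜ.ncard = Fintype.card V := by
    rw [Set.ncard_add_ncard_compl A (Set.toFinite _) (Set.toFinite _),
      Nat.card_eq_fintype_card]
  -- a vertex of the complement with no neighbor in A
  have hout2 : ∀ x, x ∉ A → 2 ≤ (G.neighborSet x \ A).ncard := by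
    intro x hx
    have h1 := hstable x hx
    have := hsplit x A
    omega
  obtain ⟨b0, hb0B, hb0A⟩ : ∃ b0, b0 ∉ A ∧ G.neighborSet b0 ∩ A = ∅ := by
    by_contra hcon
    push_neg at hcon
    have hle : Aᶜ.ncard ≤ {q : V × V | q.1 ∈ A ∧ q.2 ∉ A ∧ G.Adj q.1 q.2}.ncard := by
      refine Set.ncard_le_ncard_of_injOn
        (fun b => (if h : (G.neighborSet b ∩ A).Nonempty then h.some else b, b)) ?_ ?_
        (Set.toFinite _)
      · intro b hb
        have hne : (G.neighborSet b ∩ A).Nonempty := hcon b hb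
        have hmem := hne.some_mem
        simp only [dif_pos hne]
        exact ⟨hmem.2, hb, (hmem.1 : G.Adj b _).symm⟩
      · intro x _ y _ hxy
        exact congrArg Prod.snd hxy
    omega
  -- the component of b0 in the complement
  set C1 : Set V := {x | ∃ w : G.Walk b0 x, ∀ z ∈ w.support, z ∉ A} with hC1def
  have hb0C1 : b0 ∈ C1 := ⟨Walk.nil, by simpa using hb0B⟩
  have hC1B : ∀ x ∈ C1, x ∉ A := by
    rintro x ⟨w, hw⟩
    exact hw x w.end_mem_support
  have hclose : ∀ x ∈ C1, ∀ y, G.Adj x y → y ∉ A → y ∈ C1 := by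
    rintro x ⟨w, hw⟩ y hxy hyB
    refine ⟨w.concat hxy, ?_⟩
    intro z hz
    rw [Walk.support_concat, List.mem_append] at hz
    rcases hz with hz | hz
    · exact hw z hz
    · rw [List.mem_singleton] at hz
      exact hz ▸ hyB
  have hpre : ∀ x ∈ C1, ∃ w : G.Walk b0 x, ∀ z ∈ w.support, z ∈ C1 := by
    rintro x ⟨w, hw⟩
    refine ⟨w, fun z hz => ⟨w.takeUntil z hz, fun u hu => hw u ?_⟩⟩
    exact Walk.support_takeUntil_subset w hz hu
  set Af : Set V := C1ᶜ with hAfdef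
  have hAsub : A ⊆ Af := fun x hx hxc => (hC1B x hxc) hx
  have hmemAf : ∀ x, x ∈ Af → x ∉ A → (x ∉ A ∧ x ∉ C1) := fun x hx hxa => ⟨hxa, hx⟩
  have hnotC1nbr : ∀ x, x ∉ A → x ∉ C1 → ∀ y ∈ G.neighborSet x, y ∉ C1 := by
    intro x hxA hxC y hy hyC
    exact hxC (hclose y hyC x hy.symm hxA)
  -- degrees in Af
  have degAf : ∀ x ∈ Af, 2 ≤ (G.neighborSet x ∩ Af).ncard := by
    intro x hx
    by_cases hxA : x ∈ A
    · exact le_trans (hA2 x hxA)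
        (Set.ncard_le_ncard (Set.inter_subset_inter_right _ hAsub) (Set.toFinite _))
    · have hxC : x ∉ C1 := hx
      have hsub : G.neighborSet x \ A ⊆ G.neighborSet x ∩ Af := by
        intro z hz
        exact ⟨hz.1, hnotC1nbr x hxA hxC z hz.1⟩
      exact le_trans (hout2 x hxA) (Set.ncard_le_ncard hsub (Set.toFinite _))
  -- degrees in C1
  have degC1 : ∀ x ∈ C1, 2 ≤ (G.neighborSet x ∩ C1).ncard := by
    intro x hxC
    have hxA : x ∉ A := hC1B x hxC
    have hsub : G.neighborSet x \ A ⊆ G.neighborSet x ∩ C1 := by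
      intro z hz
      exact ⟨hz.1, hclose x hxC z hz.1 hz.2⟩
    exact le_trans (hout2 x hxA) (Set.ncard_le_ncard hsub (Set.toFinite _))
  -- degree three witnesses
  obtain ⟨astar, hastar, h3astar⟩ := hA3
  have deg3Af : 3 ≤ (G.neighborSet astar ∩ Af).ncard :=
    le_trans h3astar
      (Set.ncard_le_ncard (Set.inter_subset_inter_right _ hAsub) (Set.toFinite _))
  have deg3C1 : 3 ≤ (G.neighborSet b0 ∩ C1).ncard := by
    have hnb : G.neighborSet b0 ⊆ C1 := by
      intro y hy
      have hyA : y ∉ A := by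
        intro hyA
        have : y ∈ G.neighborSet b0 ∩ A := ⟨hy, hyA⟩
        rw [hb0A] at this
        exact this
      exact hclose b0 hb0C1 y hy hyA
    have : G.neighborSet b0 ∩ C1 = G.neighborSet b0 := by
      apply Set.inter_eq_self_of_subset_left hnb
    rw [this, hreg]
  -- single-edge conditions
  have hout1 : ∀ x ∈ Af, (G.neighborSet x \ Af).ncard ≤ 1 := by
    intro x hx
    have := degAf x hx
    have := hsplit x Af
    omega
  have hin1 : ∀ y, y ∉ Af → (G.neighborSet y ∩ Af).ncard ≤ 1 := by
    intro y hy
    have hyC : y ∈ C1 := not_not.mp hy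
    have hyA : y ∉ A := hC1B y hyC
    have hsub : G.neighborSet y ∩ Af ⊆ G.neighborSet y ∩ A := by
      intro z hz
      refine ⟨hz.1, ?_⟩
      by_contra hzA
      exact (hz.2 : z ∉ C1) (hclose y hyC z hz.1 hzA)
    exact le_trans (Set.ncard_le_ncard hsub (Set.toFinite _)) (hstable y hyA)
  -- the reach-to-A lemma
  have reachA : ∀ (a0 y : V) (w : G.Walk y a0), a0 ∈ A → y ∉ A → y ∉ C1 →
      ∃ (a : V) (w' : G.Walk y a), a ∈ A ∧ ∀ z ∈ w'.support, z ∈ Af := by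
    intro a0 y w
    induction w with
    | nil => intro ha0 hy _; exact absurd ha0 hy
    | @cons u v' _ h p ih =>
        intro ha0 hy hyc
        by_cases hvA : v' ∈ A
        · refine ⟨v', Walk.cons h Walk.nil, hvA, ?_⟩
          intro z hz
          simp only [Walk.support_cons, Walk.support_nil, List.mem_cons,
            List.mem_singleton] at hz
          rcases hz with rfl | hz
          · exact hyc
          · rcases hz with rfl | hz
            · exact hAsub hvA
            · exact absurd hz List.not_mem_nil
        · have hvC : v' ∉ C1 := fun hvC => hyc (hclose v' hvC u h.symm hy)
          obtain ⟨a, w', haA, hw'⟩ := ih ha0 hvA hvC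
          refine ⟨a, Walk.cons h w', haA, ?_⟩
          intro z hz
          rw [Walk.support_cons] at hz
          rcases List.mem_cons.mp hz with rfl | hz
          · exact hyc
          · exact hw' z hz
  -- connectivity of Af
  have hconnAf : (G.induce Af).Connected := by
    refine aux_conn (v0 := astar) (hAsub hastar) ?_
    intro x hx
    by_cases hxA : x ∈ A
    · obtain ⟨w, hw⟩ := aux_walk_of_conn hA1 hxA hastar
      exact ⟨w, fun z hz => hAsub (hw z hz)⟩
    · have hxC : x ∉ C1 := hx
      obtain ⟨w0⟩ := hconn.preconnected x astar
      obtain ⟨a, w', haA, hw'⟩ := reachA astar x w0 hastar hxA hxC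
      obtain ⟨w2, hw2⟩ := aux_walk_of_conn hA1 haA hastar
      refine ⟨w'.append w2, ?_⟩
      intro z hz
      rw [Walk.support_append, List.mem_append] at hz
      rcases hz with hz | hz
      · exact hw' z hz
      · exact hAsub (hw2 z (List.mem_of_mem_tail hz))
  -- connectivity of C1
  have hconnC1 : (G.induce C1).Connected := by
    refine aux_conn (v0 := b0) hb0C1 ?_
    intro x hx
    obtain ⟨w, hw⟩ := hpre x hx
    refine ⟨w.reverse, ?_⟩
    intro z hz
    rw [Walk.support_reverse, List.mem_reverse] at hz
    exact hw z hz
  -- cut bound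
  have hsubcut : {q : V × V | q.1 ∈ Af ∧ q.2 ∉ Af ∧ G.Adj q.1 q.2}
      ⊆ {q : V × V | q.1 ∈ A ∧ q.2 ∉ A ∧ G.Adj q.1 q.2} := by
    rintro ⟨x, y⟩ ⟨hx, hy, hadj⟩
    have hyC : y ∈ C1 := not_not.mp hy
    have hxA : x ∈ A := by
      by_contra hxA
      exact (hx : x ∉ C1) (hclose y hyC x hadj.symm hxA)
    exact ⟨hxA, hC1B y hyC, hadj⟩
  have hcutle : {q : V × V | q.1 ∈ Af ∧ q.2 ∉ Af ∧ G.Adj q.1 q.2}.ncard ≤ s - 2 := by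
    have h1 := Set.ncard_le_ncard hsubcut (Set.toFinite _)
    omega
  -- assemble
  refine ⟨Af, ?_, hcutle, hconnAf, ?_, ?_, ?_, ?_, ?_⟩
  · intro a b a' b' haA hbA hab ha'A hb'A hab'
    constructor
    · rintro rfl
      exact (Set.ncard_le_one (Set.toFinite _)).mp (hout1 a haA) b ⟨hab, hbA⟩ b' ⟨hab', hb'A⟩
    · rintro rfl
      exact (Set.ncard_le_one (Set.toFinite _)).mp (hin1 b hbA) a ⟨hab.symm, haA⟩
        a' ⟨hab'.symm, ha'A⟩
  · intro v
    rw [aux_bridge]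
    exact degAf ↑v v.2
  · refine ⟨⟨astar, hAsub hastar⟩, ?_⟩
    rw [aux_bridge]
    exact deg3Af
  · have hAfc : Afᶜ = C1 := compl_compl C1
    rw [hAfc]
    exact hconnC1
  · have hAfc : Afᶜ = C1 := compl_compl C1
    rw [hAfc]
    intro v
    rw [aux_bridge]
    exact degC1 ↑v v.2
  · have hAfc : Afᶜ = C1 := compl_compl C1
    rw [hAfc]
    refine ⟨⟨b0, hb0C1⟩, ?_⟩
    rw [aux_bridge]
    exact deg3C1
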